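/- For all natural numbers n and m with m ≤ n, the fermionic Stirling numbers satisfy the inversion (orthogonality) relations Σ_{j=m}^{n} s_f(n,j) S_f(j,m) = δ_{n,m} and Σ_{j=m}^{n} S_f(n,j) s_f(j,m) = δ_{n,m}, where δ_{n,m} is the Kronecker delta. -/

import Mathlib

open Finset

/-- `ε_n = (1 - (-1)^n)/2`, so `ε_n = 0` for even `n` and `ε_n = 1` for odd `n`. -/
def eps (n : ℕ) : ℤ := (1 - (-1 : ℤ) ^ n) / 2

/-- The fermionic Stirling numbers of the first kind, defined by the recurrence
`s_f(n+1,k) = (-1)^n s_f(n,k-1) + (-1)^{n+1} ε_n s_f(n,k)`, with `s_f(0,0) = 1`,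
`s_f(n,0) = 0` for `n ≥ 1`, and `s_f(n,k) = 0` for `k > n`. -/
def sf : ℕ → ℕ → ℤ
  | 0, 0 => 1
  | 0, _ + 1 => 0
  | _ + 1, 0 => 0
  | n + 1, k + 1 => (-1 : ℤ) ^ n * sf n k + (-1 : ℤ) ^ (n + 1) * eps n * sf n (k + 1)

/-- The fermionic Stirling numbers of the second kind, defined by the recurrence
`S_f(n+1,k) = (-1)^{k-1} S_f(n,k-1) + ε_k S_f(n,k)`, with `S_f(0,0) = 1`,
`S_f(n,0) = 0` for `n ≥ 1`, and `S_f(n,k) = 0` for `k > n`. -/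
def Sf : ℕ → ℕ → ℤ
  | 0, 0 => 1
  | 0, _ + 1 => 0
  | _ + 1, 0 => 0
  | n + 1, k + 1 => (-1 : ℤ) ^ k * Sf n k + eps (k + 1) * Sf n (k + 1)

lemma sf_zero : ∀ n k, n < k → sf n k = 0 := by
  intro n
  induction n with
  | zero =>
    intro k hk
    match k, hk with
    | k + 1, _ => rfl
  | succ n ih =>
    intro k hk
    match k, hk with
    | k + 1, hk =>
      simp only [sf]
      rw [ih k (by omega), ih (k + 1) (by omega)]
      ring

lemma Sf_zero : ∀ n k, n < k → Sf n k = 0 := by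
  intro n
  induction n with
  | zero =>
    intro k hk
    match k, hk with
    | k + 1, _ => rfl
  | succ n ih =>
    intro k hk
    match k, hk with
    | k + 1, hk =>
      simp only [Sf]
      rw [ih k (by omega), ih (k + 1) (by omega)]
      ring

lemma sum_Icc_shift (f : ℕ → ℤ) (k n : ℕ) :
    ∑ j ∈ Icc (k + 1) (n + 1), f j = ∑ i ∈ Icc k n, f (i + 1) := by
  have h : Icc (k + 1) (n + 1) = (Icc k n).map ⟨fun x => x + 1, add_left_injective 1⟩ := by
    ext x
    simp only [mem_Icc, mem_map, Function.Embedding.coeFn_mk]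
    constructor
    · rintro ⟨h1, h2⟩
      exact ⟨x - 1, ⟨by omega, by omega⟩, by omega⟩
    · rintro ⟨y, hy, h⟩
      omega
  rw [h, Finset.sum_map]
  rfl

lemma sum_Icc_bot (f : ℕ → ℤ) {k n : ℕ} (h : k ≤ n) :
    ∑ j ∈ Icc k n, f j = f k + ∑ j ∈ Icc (k + 1) n, f j := by
  have h1 : Icc k n = insert k (Icc (k + 1) n) := by
    ext x; simp only [mem_Icc, mem_insert]; omega
  have h2 : k ∉ Icc (k + 1) n := by simp only [mem_Icc]; omega
  rw [h1, Finset.sum_insert h2]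

lemma sum_Icc_top (f : ℕ → ℤ) {k n : ℕ} (h : k ≤ n + 1) :
    ∑ j ∈ Icc k (n + 1), f j = (∑ j ∈ Icc k n, f j) + f (n + 1) := by
  have h1 : Icc k (n + 1) = insert (n + 1) (Icc k n) := by
    ext x; simp only [mem_Icc, mem_insert]; omega
  have h2 : n + 1 ∉ Icc k n := by simp only [mem_Icc]; omega
  rw [h1, Finset.sum_insert h2]
  ring

lemma ortho1 : ∀ n m : ℕ, (∑ j ∈ Icc m n, sf n j * Sf j m) = if n = m then (1 : ℤ) else 0 := by
  intro n
  induction n with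
  | zero =>
    intro m
    match m with
    | 0 => simp [sf, Sf]
    | m + 1 => simp [Finset.Icc_eq_empty_of_lt (by omega : 0 < m + 1)]
  | succ n ih =>
    intro m
    match m with
    | 0 =>
      rw [if_neg (by omega)]
      apply Finset.sum_eq_zero
      intro j hj
      match j with
      | 0 => simp [sf]
      | j + 1 => simp [Sf]
    | k + 1 =>
      by_cases hkn : k ≤ n
      · have h0 : ∑ j ∈ Icc (k + 1) (n + 1), sf (n + 1) j * Sf j (k + 1)
            = ∑ i ∈ Icc k n, sf (n + 1) (i + 1) * Sf (i + 1) (k + 1) :=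
          sum_Icc_shift _ k n
        rw [h0]
        have expand : ∀ i, sf (n + 1) (i + 1) * Sf (i + 1) (k + 1) =
            (-1 : ℤ) ^ n * (sf n i * Sf (i + 1) (k + 1)) +
            ((-1 : ℤ) ^ (n + 1) * eps n) * (sf n (i + 1) * Sf (i + 1) (k + 1)) := by
          intro i
          simp only [sf]
          ring
        rw [Finset.sum_congr rfl (fun i _ => expand i), Finset.sum_add_distrib,
          ← Finset.mul_sum, ← Finset.mul_sum]
        -- term B
        have hB : ∑ i ∈ Icc k n, sf n (i + 1) * Sf (i + 1) (k + 1) =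
            if n = k + 1 then (1 : ℤ) else 0 := by
          have h1 : ∑ j ∈ Icc (k + 1) (n + 1), sf n j * Sf j (k + 1)
              = ∑ i ∈ Icc k n, sf n (i + 1) * Sf (i + 1) (k + 1) :=
            sum_Icc_shift _ k n
          rw [← h1, sum_Icc_top _ (by omega : k + 1 ≤ n + 1),
            sf_zero n (n + 1) (by omega), ih (k + 1)]
          ring
        -- term A
        have hA : ∑ i ∈ Icc k n, sf n i * Sf (i + 1) (k + 1) =
            (-1 : ℤ) ^ k * (if n = k then (1 : ℤ) else 0) +
            eps (k + 1) * (if n = k + 1 then (1 : ℤ) else 0) := by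
          have expand2 : ∀ i, sf n i * Sf (i + 1) (k + 1) =
              (-1 : ℤ) ^ k * (sf n i * Sf i k) + eps (k + 1) * (sf n i * Sf i (k + 1)) := by
            intro i
            simp only [Sf]
            ring
          rw [Finset.sum_congr rfl (fun i _ => expand2 i), Finset.sum_add_distrib,
            ← Finset.mul_sum, ← Finset.mul_sum, ih k]
          congr 1
          have h2 : ∑ j ∈ Icc k n, sf n j * Sf j (k + 1)
              = sf n k * Sf k (k + 1) + ∑ j ∈ Icc (k + 1) n, sf n j * Sf j (k + 1) :=
            sum_Icc_bot _ hkn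
          rw [h2, Sf_zero k (k + 1) (by omega), ih (k + 1)]
          ring
        rw [hA, hB]
        by_cases h1 : n = k
        · subst h1
          rw [if_pos (rfl : n = n), if_neg (show ¬n = n + 1 by omega),
            if_pos (rfl : n + 1 = n + 1)]
          have hsq : (-1 : ℤ) ^ n * (-1 : ℤ) ^ n = 1 := by
            rw [← pow_add]; exact Even.neg_one_pow ⟨n, rfl⟩
          linear_combination hsq
        · by_cases h2 : n = k + 1
          · subst h2
            rw [if_neg h1, if_pos (rfl : k + 1 = k + 1),
              if_neg (show ¬k + 1 + 1 = k + 1 by omega)]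
            ring
          · rw [if_neg h1, if_neg h2, if_neg (show ¬n + 1 = k + 1 by omega)]
            ring
      · rw [Finset.Icc_eq_empty_of_lt (by omega), if_neg (by omega), Finset.sum_empty]

lemma fin_sum_to_Icc {n : ℕ} (g : ℕ → ℤ) (a b : ℕ) (hb : b ≤ n)
    (hza : ∀ j, j < a → g j = 0) (hzb : ∀ j, b < j → g j = 0) :
    ∑ j : Fin (n + 1), g j = ∑ j ∈ Icc a b, g j := by
  rw [Fin.sum_univ_eq_sum_range]
  refine (Finset.sum_subset ?_ ?_).symm
  · intro x hx
    simp only [mem_Icc] at hx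
    simp only [Finset.mem_range]
    omega
  · intro x hx hnx
    simp only [Finset.mem_range] at hx
    simp only [mem_Icc, not_and, not_le] at hnx
    by_cases hxa : x < a
    · exact hza x hxa
    · exact hzb x (hnx (by omega))

lemma ortho2 (n m : ℕ) (h : m ≤ n) :
    (∑ j ∈ Icc m n, Sf n j * sf j m) = if n = m then (1 : ℤ) else 0 := by
  classical
  set A : Matrix (Fin (n + 1)) (Fin (n + 1)) ℤ := (fun i j => sf i j) with hA
  set B : Matrix (Fin (n + 1)) (Fin (n + 1)) ℤ := (fun i j => Sf i j) with hB
  have hAB : A * B = 1 := by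
    ext i k
    rw [Matrix.mul_apply, Matrix.one_apply]
    simp only [hA, hB]
    have hz1 : ∀ j, j < (k : ℕ) → sf (i : ℕ) j * Sf j (k : ℕ) = 0 := fun j hj => by
      rw [Sf_zero j k hj, mul_zero]
    have hz2 : ∀ j, (i : ℕ) < j → sf (i : ℕ) j * Sf j (k : ℕ) = 0 := fun j hj => by
      rw [sf_zero i j hj, zero_mul]
    have hkey : (∑ j : Fin (n + 1), sf (i : ℕ) (j : ℕ) * Sf (j : ℕ) (k : ℕ))
        = ∑ j ∈ Icc (k : ℕ) (i : ℕ), sf (i : ℕ) j * Sf j (k : ℕ) :=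
      fin_sum_to_Icc _ _ _ (Nat.lt_succ_iff.mp i.isLt) hz1 hz2
    rw [hkey, ortho1 i k]
    simp [Fin.val_inj]
  have hBA : B * A = 1 := mul_eq_one_comm.mp hAB
  have hthis := congrFun (congrFun hBA ⟨n, by omega⟩) ⟨m, by omega⟩
  rw [Matrix.mul_apply, Matrix.one_apply] at hthis
  simp only [hA, hB] at hthis
  have hz1 : ∀ j, j < m → Sf n j * sf j m = 0 := fun j hj => by
    rw [sf_zero j m hj, mul_zero]
  have hz2 : ∀ j, n < j → Sf n j * sf j m = 0 := fun j hj => by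
    rw [Sf_zero n j hj, zero_mul]
  have hkey : (∑ j : Fin (n + 1), Sf n (j : ℕ) * sf (j : ℕ) m)
      = ∑ j ∈ Icc m n, Sf n j * sf j m :=
    fin_sum_to_Icc _ _ _ le_rfl hz1 hz2
  rw [hkey] at hthis
  rw [hthis]
  simp [Fin.mk.injEq]

theorem fermionic_stirling_orthogonality (n m : ℕ) (hmn : m ≤ n) :
    (∑ j ∈ Finset.Icc m n, sf n j * Sf j m) = (if n = m then (1 : ℤ) else 0) ∧
    (∑ j ∈ Finset.Icc m n, Sf n j * sf j m) = (if n = m then (1 : ℤ) else 0) := by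
  exact ⟨ortho1 n m, ortho2 n m hmn⟩
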